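/- Let k be a real (or complex) number and let x₂, y₂ be complex numbers with x₂ + y₂ ≠ k satisfying (x₂+1)(y₂+1)(x₂+y₂) = k x₂ y₂. Set X₀ = k(x₂ + y₂ + 1)/(x₂ + y₂ - k) and Y₀ = k(-k x₂ + y₂ + 1)/(x₂ + y₂ - k). Then Y₀^2 + (k-2) X₀ Y₀ + k Y₀ = X₀^3. -/

import Mathlib

set_option maxHeartbeats 1000000


/-- The birational transformation `φ₂` maps the curve `P_k : (x+1)(y+1)(x+y) = kxy` to the
Weierstrass curve `U_k : Y² + (k-2)XY + kY = X³` via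
`X₀ = k(x₂+y₂+1)/(x₂+y₂-k)`, `Y₀ = k(-kx₂+y₂+1)/(x₂+y₂-k)`. -/
theorem phi2_maps_Pk_to_Uk (k x₂ y₂ : ℂ) (hne : x₂ + y₂ ≠ k)
    (hP : (x₂ + 1) * (y₂ + 1) * (x₂ + y₂) = k * x₂ * y₂) :
    (k * (-k * x₂ + y₂ + 1) / (x₂ + y₂ - k)) ^ 2 +
      (k - 2) * (k * (x₂ + y₂ + 1) / (x₂ + y₂ - k)) *
        (k * (-k * x₂ + y₂ + 1) / (x₂ + y₂ - k)) +
      k * (k * (-k * x₂ + y₂ + 1) / (x₂ + y₂ - k)) =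
    (k * (x₂ + y₂ + 1) / (x₂ + y₂ - k)) ^ 3 := by
  have hd : x₂ + y₂ - k ≠ 0 := sub_ne_zero.mpr hne
  field_simp
  linear_combination (-(k ^ 2) * (k + 1) ^ 2) * hP
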